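/- Let D = (D_i)_{i∈ℕ} be a higher derivation of order ∞ from A to C over k. Let P_D be the free C-module with basis (e_i)_{i∈ℕ}, endowed with the A-module structure determined by a·(Σ_i c_i e_i) = Σ_i c_i·(Σ_{j=0}^i D_{i-j}(a)·e_j) (a finite sum in each degree); this is a well-defined A-module structure commuting with the C-action. Then for every A-module M and every C-module N there is a bijection HS^∞_D(M,N) ≃ Hom_C(M ⊗_A P_D, N), natural in N; i.e., the functor N ↦ HS^∞_D(M,N) from C-modules to sets is represented by the C-module M ⊗_A P_D. -/

import Mathlib

open TensorProduct

universe w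

/-- A higher derivation of order `∞` from `A` to `C` over `k`. -/
def IsHSDerivInf (k : Type*) {A C : Type*} [CommRing k] [CommRing A] [CommRing C]
    [Algebra k A] [Algebra k C] (D : ℕ → (A →ₗ[k] C)) : Prop :=
  D 0 1 = 1 ∧
    ∀ (i : ℕ) (a b : A),
      D i (a * b) = ∑ p ∈ Finset.range (i + 1), D p a * D (i - p) b

section Aux

variable {k A C : Type*} [CommRing k] [CommRing A] [CommRing C]
    [Algebra k A] [Algebra k C]
    {D : ℕ → (A →ₗ[k] C)}

/-- For a higher derivation, `D i 1 = 0` for `i > 0`. -/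
lemma hsAux_one (hD : IsHSDerivInf k D) : ∀ i, 0 < i → D i (1 : A) = 0 := by
  intro i
  induction i using Nat.strong_induction_on with
  | _ i ih =>
    intro hi
    obtain ⟨n, rfl⟩ := Nat.exists_eq_add_of_lt hi
    simp only [Nat.zero_add] at *
    have h := hD.2 (n + 1) 1 1
    rw [one_mul, Finset.sum_range_succ', Finset.sum_range_succ] at h
    have hmid : ∀ p ∈ Finset.range n,
        D (p + 1) (1 : A) * D (n + 1 - (p + 1)) (1 : A) = 0 := by
      intro p hp
      have hp' := Finset.mem_range.mp hp
      rw [ih (p + 1) (by omega) (by omega), zero_mul]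
    rw [Finset.sum_eq_zero hmid, zero_add] at h
    simp only [Nat.sub_self, Nat.sub_zero, hD.1, mul_one, one_mul] at h
    -- h : D (n+1) 1 = D (n+1) 1 + D (n+1) 1
    exact left_eq_add.mp h

variable {P : Type*} [AddCommGroup P] [Module C P] [Module A P] [SMulCommClass A C P]

/-- The `k`-algebra structure maps act the same way on basis elements. -/
lemma hsAux_alg (hD : IsHSDerivInf k D) (b : Module.Basis ℕ C P)
    (hsmul : ∀ (a : A) (i : ℕ),
      a • b i = ∑ j ∈ Finset.range (i + 1), D (i - j) a • b j)
    (c : k) (i : ℕ) :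
    (algebraMap k A c) • b i = (algebraMap k C c) • b i := by
  rw [hsmul, Finset.sum_range_succ]
  have hmid : ∀ j ∈ Finset.range i, D (i - j) (algebraMap k A c) • b j = 0 := by
    intro j hj
    have hj' := Finset.mem_range.mp hj
    have : D (i - j) (algebraMap k A c) = 0 := by
      have : (algebraMap k A c) = c • (1 : A) := by
        rw [Algebra.algebraMap_eq_smul_one]
      rw [this, map_smul, hsAux_one hD (i - j) (by omega), smul_zero]
    rw [this, zero_smul]
  rw [Finset.sum_eq_zero hmid, zero_add, Nat.sub_self]
  have : D 0 (algebraMap k A c) = algebraMap k C c := by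
    rw [Algebra.algebraMap_eq_smul_one, map_smul, hD.1,
      ← Algebra.algebraMap_eq_smul_one]
  rw [this]

variable {M : Type*} [AddCommGroup M] [Module A M] [Module k M] [IsScalarTower k A M]
variable {N : Type w} [AddCommGroup N] [Module C N] [Module k N] [IsScalarTower k C N]

/-- Scalar multiplication by `a : A` on `M`, as a `k`-linear map. -/
def hsAux_aM (a : A) : M →ₗ[k] M where
  toFun m := a • m
  map_add' x y := smul_add a x y
  map_smul' c x := smul_comm a c x

/-- Scalar multiplication by `a : A` on `P`, as a `C`-linear map. -/
def hsAux_aP (a : A) : P →ₗ[C] P where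
  toFun p := a • p
  map_add' x y := smul_add a x y
  map_smul' c x := smul_comm a c x

/-- The balancing property of `Basis.constr` of a higher derivation. -/
lemma hsAux_balanced (hD : IsHSDerivInf k D) (b : Module.Basis ℕ C P)
    (hsmul : ∀ (a : A) (i : ℕ),
      a • b i = ∑ j ∈ Finset.range (i + 1), D (i - j) a • b j)
    (Δ : ℕ → (M →ₗ[k] N))
    (hΔ : ∀ (i : ℕ) (a : A) (m : M),
      Δ i (a • m) = ∑ p ∈ Finset.range (i + 1), D p a • Δ (i - p) m)
    (a : A) (p : P) (m : M) :
    b.constr C Δ (a • p) m = b.constr C Δ p (a • m) := by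
  let L := b.constr C Δ
  let G1 : P →ₗ[C] (M →ₗ[k] N) := L.comp (hsAux_aP a)
  let G2 : P →ₗ[C] (M →ₗ[k] N) :=
    { toFun := fun p => (L p).comp (hsAux_aM a)
      map_add' := fun x y => by simp [LinearMap.add_comp]
      map_smul' := fun c x => by simp [LinearMap.smul_comp] }
  have key : G1 = G2 := by
    apply b.ext
    intro i
    ext m
    show L (a • b i) m = (L (b i)) (a • m)
    rw [hsmul, map_sum]
    simp only [map_smul, L, Module.Basis.constr_basis]
    rw [hΔ i a m]
    simp only [LinearMap.coe_sum, Finset.sum_apply, LinearMap.smul_apply]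
    calc ∑ j ∈ Finset.range (i + 1), D (i - j) a • Δ j m
        = ∑ j ∈ Finset.range (i + 1), D (i - j) a • Δ (i - (i - j)) m := by
          refine Finset.sum_congr rfl fun j hj => ?_
          rw [Nat.sub_sub_self (Nat.lt_succ_iff.mp (Finset.mem_range.mp hj))]
      _ = ∑ p ∈ Finset.range (i + 1), D p a • Δ (i - p) m := by
          have := Finset.sum_range_reflect (fun p => D p a • Δ (i - p) m) (i + 1)
          simpa using this
  have := congrArg (fun (F : P →ₗ[C] (M →ₗ[k] N)) => F p m) key
  exact this

/-- The forward map: from a higher derivation over `D` to a `C`-linear map on the tensor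
product. -/
noncomputable def hsAux_toHom (hD : IsHSDerivInf k D) (b : Module.Basis ℕ C P)
    (hsmul : ∀ (a : A) (i : ℕ),
      a • b i = ∑ j ∈ Finset.range (i + 1), D (i - j) a • b j)
    (Δ : ℕ → (M →ₗ[k] N))
    (hΔ : ∀ (i : ℕ) (a : A) (m : M),
      Δ i (a • m) = ∑ p ∈ Finset.range (i + 1), D p a • Δ (i - p) m) :
    P ⊗[A] M →ₗ[C] N :=
  letI F : P ⊗[A] M →+ N := TensorProduct.liftAddHom
      { toFun := fun p => ((b.constr C Δ) p).toAddMonoidHom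
        map_zero' := by ext m; simp
        map_add' := fun p q => by ext m; simp }
      (fun a p m => hsAux_balanced hD b hsmul Δ hΔ a p m)
  { toFun := F
    map_add' := fun x y => map_add F x y
    map_smul' := fun c t => by
      show F (c • t) = c • F t
      induction t using TensorProduct.induction_on with
      | zero => simp
      | tmul p m =>
        rw [TensorProduct.smul_tmul']
        show (b.constr C Δ (c • p)) m = c • (b.constr C Δ p) m
        rw [map_smul]; rfl
      | add x y hx hy =>
        rw [smul_add, map_add, map_add, hx, hy, smul_add] }

lemma hsAux_toHom_tmul (hD : IsHSDerivInf k D) (b : Module.Basis ℕ C P)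
    (hsmul : ∀ (a : A) (i : ℕ),
      a • b i = ∑ j ∈ Finset.range (i + 1), D (i - j) a • b j)
    (Δ : ℕ → (M →ₗ[k] N))
    (hΔ : ∀ (i : ℕ) (a : A) (m : M),
      Δ i (a • m) = ∑ p ∈ Finset.range (i + 1), D p a • Δ (i - p) m)
    (p : P) (m : M) :
    hsAux_toHom hD b hsmul Δ hΔ (p ⊗ₜ[A] m) = b.constr C Δ p m := rfl

/-- The inverse map: from a `C`-linear map on the tensor product to a family of `k`-linear
maps. -/
noncomputable def hsAux_invFam (hD : IsHSDerivInf k D) (b : Module.Basis ℕ C P)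
    (hsmul : ∀ (a : A) (i : ℕ),
      a • b i = ∑ j ∈ Finset.range (i + 1), D (i - j) a • b j)
    (φ : P ⊗[A] M →ₗ[C] N) (i : ℕ) : M →ₗ[k] N where
  toFun m := φ (b i ⊗ₜ[A] m)
  map_add' x y := by
    show φ (b i ⊗ₜ[A] (x + y)) = φ (b i ⊗ₜ[A] x) + φ (b i ⊗ₜ[A] y)
    rw [TensorProduct.tmul_add, map_add]
  map_smul' c m := by
    show φ (b i ⊗ₜ[A] (c • m)) = c • φ (b i ⊗ₜ[A] m)
    rw [← algebraMap_smul A c m, ← TensorProduct.smul_tmul,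
      hsAux_alg hD b hsmul c i, ← TensorProduct.smul_tmul', map_smul,
      algebraMap_smul]

lemma hsAux_invFam_prop (hD : IsHSDerivInf k D) (b : Module.Basis ℕ C P)
    (hsmul : ∀ (a : A) (i : ℕ),
      a • b i = ∑ j ∈ Finset.range (i + 1), D (i - j) a • b j)
    (φ : P ⊗[A] M →ₗ[C] N) (i : ℕ) (a : A) (m : M) :
    hsAux_invFam hD b hsmul φ i (a • m)
      = ∑ p ∈ Finset.range (i + 1), D p a • hsAux_invFam hD b hsmul φ (i - p) m := by
  show φ (b i ⊗ₜ[A] (a • m)) = _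
  rw [← TensorProduct.smul_tmul, hsmul, TensorProduct.sum_tmul, map_sum]
  calc ∑ j ∈ Finset.range (i + 1), φ ((D (i - j) a • b j) ⊗ₜ[A] m)
      = ∑ j ∈ Finset.range (i + 1), D (i - j) a • φ (b j ⊗ₜ[A] m) := by
        refine Finset.sum_congr rfl fun j hj => ?_
        rw [← TensorProduct.smul_tmul', map_smul]
    _ = ∑ j ∈ Finset.range (i + 1),
          D (i - j) a • φ (b (i - (i - j)) ⊗ₜ[A] m) := by
        refine Finset.sum_congr rfl fun j hj => ?_
        rw [Nat.sub_sub_self (Nat.lt_succ_iff.mp (Finset.mem_range.mp hj))]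
    _ = ∑ p ∈ Finset.range (i + 1), D p a • φ (b (i - p) ⊗ₜ[A] m) := by
        have := Finset.sum_range_reflect
          (fun p => D p a • φ (b (i - p) ⊗ₜ[A] m)) (i + 1)
        simpa using this

end Aux

/-- let `D ∈ HS^∞_k(A,C)` and let `P_D` be the free `C`-module with basis
`(e_i)_{i∈ℕ}` endowed with the `A`-module structure (commuting with the `C`-action)
determined by `a • e_i = Σ_{j=0}^i D_{i-j}(a) • e_j`.  Then for every `A`-module `M` the
functor `N ↦ HS^∞_D(M,N)` on `C`-modules is represented by the `C`-module `M ⊗_A P_D`: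
there are bijections `HS^∞_D(M,N) ≃ Hom_C(M ⊗_A P_D, N)`, natural in `N`, sending `Δ` to
the map determined by `e_j ⊗ m ↦ Δ_j(m)`. -/
theorem hs_module_inf_represents (k A C : Type*) [CommRing k] [CommRing A] [CommRing C]
    [Algebra k A] [Algebra k C]
    (D : ℕ → (A →ₗ[k] C)) (hD : IsHSDerivInf k D)
    (P : Type*) [AddCommGroup P] [Module C P] [Module A P] [SMulCommClass A C P]
    (b : Module.Basis ℕ C P)
    (hsmul : ∀ (a : A) (i : ℕ),
      a • b i = ∑ j ∈ Finset.range (i + 1), D (i - j) a • b j)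
    (M : Type*) [AddCommGroup M] [Module A M] [Module k M] [IsScalarTower k A M] :
    ∃ e : ∀ (N : Type w) [AddCommGroup N] [Module C N] [Module k N] [IsScalarTower k C N],
        {Δ : ℕ → (M →ₗ[k] N) //
          ∀ (i : ℕ) (a : A) (m : M),
            Δ i (a • m) = ∑ p ∈ Finset.range (i + 1), D p a • Δ (i - p) m} ≃
        (P ⊗[A] M →ₗ[C] N),
      ∀ (N : Type w) [AddCommGroup N] [Module C N] [Module k N] [IsScalarTower k C N]
        (Δ : {Δ : ℕ → (M →ₗ[k] N) //
          ∀ (i : ℕ) (a : A) (m : M),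
            Δ i (a • m) = ∑ p ∈ Finset.range (i + 1), D p a • Δ (i - p) m})
        (j : ℕ) (m : M),
        e N Δ (b j ⊗ₜ[A] m) = Δ.1 j m := by
  refine ⟨fun N _ _ _ _ =>
    { toFun := fun Δ => hsAux_toHom hD b hsmul Δ.1 Δ.2
      invFun := fun φ => ⟨hsAux_invFam hD b hsmul φ, hsAux_invFam_prop hD b hsmul φ⟩
      left_inv := ?_
      right_inv := ?_ }, ?_⟩
  · intro Δ
    apply Subtype.ext
    funext i
    ext m
    show hsAux_toHom hD b hsmul Δ.1 Δ.2 (b i ⊗ₜ[A] m) = Δ.1 i m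
    rw [hsAux_toHom_tmul, Module.Basis.constr_basis]
  · intro φ
    apply LinearMap.ext
    intro t
    induction t using TensorProduct.induction_on with
    | zero => simp
    | tmul p m =>
      rw [hsAux_toHom_tmul]
      -- show `b.constr C Δ' p m = φ (p ⊗ₜ m)` by `C`-linearity in `p`
      have key : ∀ q : P, b.constr C (hsAux_invFam hD b hsmul φ) q m = φ (q ⊗ₜ[A] m) := by
        let E1 : P →ₗ[C] N :=
          { toFun := fun q => b.constr C (hsAux_invFam hD b hsmul φ) q m
            map_add' := fun x y => by
              show b.constr C (hsAux_invFam hD b hsmul φ) (x + y) m = _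
              rw [map_add]; rfl
            map_smul' := fun c x => by
              show b.constr C (hsAux_invFam hD b hsmul φ) (c • x) m = _
              rw [map_smul]; rfl }
        let E2 : P →ₗ[C] N :=
          { toFun := fun q => φ (q ⊗ₜ[A] m)
            map_add' := fun x y => by
              show φ ((x + y) ⊗ₜ[A] m) = _
              rw [TensorProduct.add_tmul, map_add]
            map_smul' := fun c x => by
              show φ ((c • x) ⊗ₜ[A] m) = _
              rw [← TensorProduct.smul_tmul', map_smul]; rfl }
        have : E1 = E2 := by
          apply b.ext
          intro i
          show b.constr C (hsAux_invFam hD b hsmul φ) (b i) m = φ (b i ⊗ₜ[A] m)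
          rw [Module.Basis.constr_basis]
          rfl
        intro q
        exact congrArg (fun (F : P →ₗ[C] N) => F q) this
      exact key p
    | add x y hx hy =>
      rw [map_add, map_add, hx, hy]
  · intro N _ _ _ _ Δ j m
    show hsAux_toHom hD b hsmul Δ.1 Δ.2 (b j ⊗ₜ[A] m) = Δ.1 j m
    rw [hsAux_toHom_tmul, Module.Basis.constr_basis]
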